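/- Let K ≥ 2 be an integer. Then the NSB hyperprior density integrates to one: ∫_0^∞ ( K ψ₁(Kα + 1) − ψ₁(α + 1) ) dα = log K, where ψ₁ is the trigamma function (the second derivative of log Γ). Equivalently, p_nsb(α) = ( K ψ₁(Kα + 1) − ψ₁(α + 1) ) / log K is a probability density on (0, ∞). -/

import Mathlib

open Real MeasureTheory

/-- The digamma function `ψ(t) = d/dt log Γ(t)`. -/
noncomputable def digamma (t : ℝ) : ℝ := deriv (fun s : ℝ => Real.log (Real.Gamma s)) t

/-- The trigamma function `ψ₁ = ψ′`. -/
noncomputable def trigamma (t : ℝ) : ℝ := deriv digamma t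

open Filter Topology Set

local notation "γ" => Real.eulerMascheroniConstant

/-- Digamma minus its constant: series form. -/
noncomputable def dg (x : ℝ) : ℝ := -γ + ∑' n : ℕ, (1/((n:ℝ)+1) - 1/(x+n))

/-- Trigamma series. -/
noncomputable def tg (x : ℝ) : ℝ := ∑' n : ℕ, 1/(x+(n:ℝ))^2

lemma summable_inv_sq : Summable (fun n : ℕ => 1/((n:ℝ)+1)^2) := by
  have base : Summable (fun n : ℕ => 1 / ((n:ℝ))^2) := by
    rw [Real.summable_one_div_nat_pow]; norm_num
  have := (summable_nat_add_iff 1).mpr base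
  simpa using this

lemma aux_bound {a : ℝ} (ha : 0 < a) (n : ℕ) :
    1/(a+(n:ℝ)) ≤ ((1+a)/a) * (1/((n:ℝ)+1)) := by
  have hn : (0:ℝ) ≤ n := Nat.cast_nonneg n
  rw [div_mul_div_comm, mul_one, div_le_div_iff₀ (by positivity) (by positivity)]
  nlinarith

lemma dterm_eq {x : ℝ} (hx : 0 < x) (n : ℕ) :
    1/((n:ℝ)+1) - 1/(x+n) = (x-1)/(((n:ℝ)+1)*(x+n)) := by
  have h1 : ((n:ℝ)+1) ≠ 0 := by positivity
  have h2 : (x+(n:ℝ)) ≠ 0 := by positivity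
  field_simp
  ring

lemma dterm_bound {a b x : ℝ} (ha : 0 < a) (hx : x ∈ Set.Icc a b) (n : ℕ) :
    |1/((n:ℝ)+1) - 1/(x+n)| ≤ ((1+b)*((1+a)/a)) * (1/((n:ℝ)+1)^2) := by
  obtain ⟨hax, hxb⟩ := hx
  have hx0 : 0 < x := ha.trans_le hax
  have hn : (0:ℝ) ≤ n := Nat.cast_nonneg n
  have hn1 : (0:ℝ) < (n:ℝ)+1 := by positivity
  have ha' : a ≠ 0 := ha.ne'
  rw [dterm_eq hx0, abs_div, abs_of_pos (show (0:ℝ) < ((n:ℝ)+1)*(x+n) by positivity)]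
  have h1 : |x - 1| ≤ 1 + b := by
    rw [abs_le]; constructor <;> nlinarith
  calc |x-1| / (((n:ℝ)+1)*(x+n)) ≤ (1+b) / (((n:ℝ)+1)*(a+n)) := by
        apply div_le_div₀ (by nlinarith) h1 (by positivity)
        have : a + (n:ℝ) ≤ x + n := by linarith
        nlinarith
      _ = (1+b) * (1/((n:ℝ)+1)) * (1/(a+n)) := by
        rw [mul_one_div, mul_one_div, div_div]
      _ ≤ (1+b) * (1/((n:ℝ)+1)) * (((1+a)/a) * (1/((n:ℝ)+1))) :=
        mul_le_mul_of_nonneg_left (aux_bound ha n) (mul_nonneg (by nlinarith) (by positivity))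
      _ = ((1+b)*((1+a)/a)) * (1/((n:ℝ)+1)^2) := by
        rw [mul_mul_mul_comm, div_mul_div_comm, one_mul, ← sq]

lemma summable_dterm {x : ℝ} (hx : 0 < x) :
    Summable (fun n : ℕ => 1/((n:ℝ)+1) - 1/(x+n)) := by
  apply Summable.of_norm
  apply Summable.of_nonneg_of_le (fun n => norm_nonneg _)
    (fun n => dterm_bound hx (Set.mem_Icc.mpr ⟨le_refl x, le_refl x⟩) n)
  exact summable_inv_sq.mul_left _

lemma tg_term_bound {x : ℝ} (hx : 0 < x) (n : ℕ) :
    1/(x+(n:ℝ))^2 ≤ ((1+x)/x)^2 * (1/((n:ℝ)+1)^2) := by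
  have h := aux_bound hx n
  have h0 : (0:ℝ) ≤ 1/(x+(n:ℝ)) := by positivity
  have h2 := mul_le_mul h h h0 (by positivity)
  calc 1/(x+(n:ℝ))^2 = 1/(x+(n:ℝ)) * (1/(x+(n:ℝ))) := by
        rw [div_mul_div_comm, one_mul, ← sq]
    _ ≤ ((1+x)/x * (1/((n:ℝ)+1))) * ((1+x)/x * (1/((n:ℝ)+1))) := h2
    _ = ((1+x)/x)^2 * (1/((n:ℝ)+1)^2) := by
        rw [mul_mul_mul_comm, ← sq, div_mul_div_comm, one_mul, ← sq]

lemma summable_tg {x : ℝ} (hx : 0 < x) :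
    Summable (fun n : ℕ => 1/(x+(n:ℝ))^2) :=
  Summable.of_nonneg_of_le (fun n => by positivity) (fun n => tg_term_bound hx n)
    (summable_inv_sq.mul_left (((1+x)/x)^2))

lemma tg_nonneg {x : ℝ} (hx : 0 < x) : 0 ≤ tg x :=
  tsum_nonneg (fun n => by positivity)

lemma tg_anti {x y : ℝ} (hx : 0 < x) (hxy : x ≤ y) : tg y ≤ tg x := by
  have hy : 0 < y := hx.trans_le hxy
  refine Summable.tsum_le_tsum (fun n => ?_) (summable_tg hy) (summable_tg hx)
  have h1 : (0:ℝ) < x + n := add_pos_of_pos_of_nonneg hx (Nat.cast_nonneg n)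
  gcongr

lemma tg_le {x : ℝ} (hx : 1 < x) : tg x ≤ 1/(x-1) := by
  apply Real.tsum_le_of_sum_range_le (fun n => by positivity)
  intro n
  have key : ∀ i ∈ Finset.range n, 1/(x+(i:ℝ))^2 ≤
      (fun i : ℕ => 1/(x-1+(i:ℝ))) i - (fun i : ℕ => 1/(x-1+(i:ℝ))) (i+1) := by
    intro i _
    have h1 : (0:ℝ) < x - 1 + i := by
      have : (0:ℝ) ≤ i := Nat.cast_nonneg i
      linarith
    have h2 : (0:ℝ) < x + i := by linarith
    simp only [Nat.cast_add, Nat.cast_one]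
    rw [div_sub_div _ _ h1.ne' (by linarith : (x-1+((i:ℝ)+1)) ≠ 0)]
    have e : (x-1+((i:ℝ)+1)) = x + i := by ring
    rw [e]
    rw [div_le_div_iff₀ (by positivity) (by positivity)]
    nlinarith
  calc ∑ i ∈ Finset.range n, 1/(x+(i:ℝ))^2
      ≤ ∑ i ∈ Finset.range n,
        ((fun i : ℕ => 1/(x-1+(i:ℝ))) i - (fun i : ℕ => 1/(x-1+(i:ℝ))) (i+1)) :=
        Finset.sum_le_sum key
    _ = 1/(x-1+(0:ℕ)) - 1/(x-1+(n:ℝ)) := by rw [Finset.sum_range_sub' (fun i : ℕ => 1/(x-1+(i:ℝ)))]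
    _ ≤ 1/(x-1) := by
        have h1 : (0:ℝ) < x - 1 + n := by
          have : (0:ℝ) ≤ n := Nat.cast_nonneg n
          linarith
        have : (0:ℝ) ≤ 1/(x-1+(n:ℝ)) := by positivity
        simp only [Nat.cast_zero, add_zero]
        linarith

lemma tg_ge {x : ℝ} (hx : 0 < x) : 1/x ≤ tg x := by
  have hlim : Tendsto (fun n : ℕ => 1/x - 1/(x+(n:ℝ))) atTop (𝓝 (1/x)) := by
    have h1 : Tendsto (fun n : ℕ => x + (n:ℝ)) atTop atTop :=
      tendsto_atTop_add_const_left _ x tendsto_natCast_atTop_atTop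
    have h2 : Tendsto (fun n : ℕ => 1/(x+(n:ℝ))) atTop (𝓝 0) := by
      simpa only [one_div, Pi.inv_def] using h1.inv_tendsto_atTop
    simpa using tendsto_const_nhds.sub h2
  refine le_of_tendsto' hlim (fun n => ?_)
  have key : ∀ i ∈ Finset.range n,
      (fun i : ℕ => 1/(x+(i:ℝ))) i - (fun i : ℕ => 1/(x+(i:ℝ))) (i+1) ≤ 1/(x+(i:ℝ))^2 := by
    intro i _
    have h0 : (0:ℝ) ≤ i := Nat.cast_nonneg i
    have h1 : (0:ℝ) < x + i := by linarith
    simp only [Nat.cast_add, Nat.cast_one]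
    rw [div_sub_div _ _ h1.ne' (by linarith : (x+((i:ℝ)+1)) ≠ 0)]
    rw [div_le_div_iff₀ (by positivity) (by positivity)]
    nlinarith
  calc 1/x - 1/(x+(n:ℝ))
      = 1/(x+(0:ℕ)) - 1/(x+(n:ℝ)) := by norm_num
    _ = ∑ i ∈ Finset.range n,
        ((fun i : ℕ => 1/(x+(i:ℝ))) i - (fun i : ℕ => 1/(x+(i:ℝ))) (i+1)) := by
        rw [Finset.sum_range_sub' (fun i : ℕ => 1/(x+(i:ℝ)))]
    _ ≤ ∑ i ∈ Finset.range n, 1/(x+(i:ℝ))^2 := Finset.sum_le_sum key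
    _ ≤ tg x := Summable.sum_le_tsum _ (fun i _ => by positivity) (summable_tg hx)

lemma tg_one_le_two : tg 1 ≤ 2 := by
  have h1 : tg 1 = 1 + tg 2 := by
    rw [tg, Summable.tsum_eq_zero_add (summable_tg one_pos)]
    norm_num
    rw [tg]
    apply tsum_congr
    intro n
    ring_nf
  have h2 : tg 2 ≤ 1 := by
    have := tg_le (show (1:ℝ) < 2 by norm_num)
    norm_num at this
    exact this
  linarith

lemma harmonic_cast (k : ℕ) : (harmonic k : ℝ) = ∑ m ∈ Finset.range k, 1/((m:ℝ)+1) := by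
  rw [harmonic]
  push_cast
  simp [one_div]

lemma shiftTUO {F : ℕ → ℝ → ℝ} {g : ℝ → ℝ} {s : Set ℝ}
    (h : TendstoUniformlyOn F g atTop s) :
    TendstoUniformlyOn (fun n => F (n+1)) g atTop s :=
  fun u hu => (tendsto_add_atTop_nat 1).eventually (h u hu)

lemma hasDerivAt_log_Gamma {x : ℝ} (hx : 0 < x) :
    HasDerivAt (fun s : ℝ => Real.log (Real.Gamma s)) (dg x) x := by
  have ha : 0 < x/2 := by positivity
  set a := x/2
  set b := x+1 with hb_def
  have hmem : x ∈ Ioo a b := ⟨by simp only [a]; linarith, by simp only [b]; linarith⟩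
  set t : ℕ → ℝ → ℝ := fun m y => 1/((m:ℝ)+1) - 1/(y+m) with ht_def
  -- uniform convergence of the series part
  have hUnif : TendstoUniformlyOn (fun (n : ℕ) (y : ℝ) => ∑ m ∈ Finset.range n, t m y)
      (fun y => ∑' m, t m y) atTop (Ioo a b) := by
    apply tendstoUniformlyOn_tsum_nat (summable_inv_sq.mul_left ((1+b)*((1+a)/a)))
    intro m y hy
    simpa [Real.norm_eq_abs, ht_def] using dterm_bound ha ⟨le_of_lt hy.1, le_of_lt hy.2⟩ m
  have hUnif' := shiftTUO hUnif
  -- convergence of constants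
  have hc : Tendsto (fun n : ℕ => Real.log n - (harmonic (n+1) : ℝ)) atTop (𝓝 (-γ)) := by
    have h2 : Tendsto (fun n : ℕ => 1/((n:ℝ)+1)) atTop (𝓝 0) := by
      have h1 : Tendsto (fun n : ℕ => (n:ℝ) + 1) atTop atTop :=
        tendsto_atTop_add_const_right _ 1 tendsto_natCast_atTop_atTop
      simpa only [one_div, Pi.inv_def] using h1.inv_tendsto_atTop
    have h3 := (Real.tendsto_harmonic_sub_log.neg.sub h2)
    have h4 : (fun n : ℕ => -((harmonic n : ℝ) - Real.log n) - 1/((n:ℝ)+1)) =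
        fun n : ℕ => Real.log n - (harmonic (n+1) : ℝ) := by
      funext n
      have := harmonic_succ n
      have hcast : ((harmonic (n+1) : ℚ) : ℝ) = (harmonic n : ℝ) + 1/((n:ℝ)+1) := by
        rw [this]
        push_cast
        ring
      rw [hcast]
      ring
    rw [h4] at h3
    simpa using h3
  have hconst : TendstoUniformlyOn (fun (n : ℕ) (_ : ℝ) => Real.log n - (harmonic (n+1) : ℝ))
      (fun _ => -γ) atTop (Ioo a b) := hc.tendstoUniformlyOn_const _
  -- the derivative candidates
  set f' : ℕ → ℝ → ℝ := fun n y => Real.log n - ∑ m ∈ Finset.range (n+1), 1/(y+m) with hf'_def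
  have hf'unif : TendstoUniformlyOn f' (fun y => -γ + ∑' m, t m y) atTop (Ioo a b) := by
    have hadd := hconst.add hUnif'
    apply hadd.congr
    apply Filter.Eventually.of_forall
    intro n y hy
    simp only [Pi.add_apply, hf'_def, ht_def]
    rw [harmonic_cast (n+1), Finset.sum_sub_distrib]
    ring
  -- derivatives of logGammaSeq
  have hf : ∀ n : ℕ, ∀ y ∈ Ioo a b, HasDerivAt (fun z => Real.BohrMollerup.logGammaSeq z n) (f' n y) y := by
    intro n y hy
    have hy0 : 0 < y := ha.trans hy.1
    have h1 : HasDerivAt (fun z : ℝ => z * Real.log n + Real.log (Nat.factorial n : ℝ)) (Real.log n) y := by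
      simpa using ((hasDerivAt_id y).mul_const (Real.log n)).add_const (Real.log (Nat.factorial n : ℝ))
    have h2 : HasDerivAt (fun z : ℝ => ∑ m ∈ Finset.range (n+1), Real.log (z+m))
        (∑ m ∈ Finset.range (n+1), 1/(y+m)) y := by
      apply HasDerivAt.fun_sum
      intro m _
      have hm : (0:ℝ) < y + m := add_pos_of_pos_of_nonneg hy0 (Nat.cast_nonneg m)
      have := ((hasDerivAt_id y).add_const (m:ℝ)).log hm.ne'
      simpa using this
    have := h1.fun_sub h2
    simpa only [Real.BohrMollerup.logGammaSeq, hf'_def] using this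
  -- pointwise convergence to log Gamma
  have hfg : ∀ y ∈ Ioo a b, Tendsto (fun n => Real.BohrMollerup.logGammaSeq y n) atTop
      (𝓝 (Real.log (Real.Gamma y))) := fun y hy => Real.BohrMollerup.tendsto_log_gamma (ha.trans hy.1)
  have := hasDerivAt_of_tendstoUniformlyOn isOpen_Ioo hf'unif
    (Filter.Eventually.of_forall hf) hfg hmem
  simpa only [dg, ht_def] using this

lemma hasDerivAt_dg {x : ℝ} (hx : 0 < x) : HasDerivAt dg (tg x) x := by
  have ha : 0 < x/2 := by positivity
  set a := x/2
  set b := x+1 with hb_def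
  have hmem : x ∈ Ioo a b := ⟨by simp only [a]; linarith, by simp only [b]; linarith⟩
  set t : ℕ → ℝ → ℝ := fun m y => 1/((m:ℝ)+1) - 1/(y+m) with ht_def
  set f : ℕ → ℝ → ℝ := fun n y => -γ + ∑ m ∈ Finset.range n, t m y with hf_def
  set f' : ℕ → ℝ → ℝ := fun n y => ∑ m ∈ Finset.range n, 1/(y+(m:ℝ))^2 with hf'_def
  have hf'unif : TendstoUniformlyOn f' (fun y => ∑' m : ℕ, 1/(y+(m:ℝ))^2) atTop (Ioo a b) := by
    apply tendstoUniformlyOn_tsum_nat (summable_inv_sq.mul_left (((1+a)/a)^2))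
    intro m y hy
    have hy0 : 0 < y := ha.trans hy.1
    have ham : (0:ℝ) < a + m := add_pos_of_pos_of_nonneg ha (Nat.cast_nonneg m)
    have h1 : 1/(y+(m:ℝ))^2 ≤ 1/(a+(m:ℝ))^2 := by
      gcongr
      exact hy.1.le
    have h2 := tg_term_bound ha m
    rw [Real.norm_eq_abs, abs_of_nonneg (by positivity)]
    exact h1.trans h2
  have hf : ∀ n : ℕ, ∀ y ∈ Ioo a b, HasDerivAt (f n) (f' n y) y := by
    intro n y hy
    have hy0 : 0 < y := ha.trans hy.1
    have hsum : HasDerivAt (fun z => ∑ m ∈ Finset.range n, t m z)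
        (∑ m ∈ Finset.range n, 1/(y+(m:ℝ))^2) y := by
      apply HasDerivAt.fun_sum
      intro m _
      have hm : (0:ℝ) < y + m := add_pos_of_pos_of_nonneg hy0 (Nat.cast_nonneg m)
      have hinv : HasDerivAt (fun z : ℝ => (z+(m:ℝ))⁻¹) (-1/(y+(m:ℝ))^2) y := by
        have := ((hasDerivAt_id y).add_const (m:ℝ)).fun_inv hm.ne'
        simpa using this
      have h3 : HasDerivAt (fun z : ℝ => 1/((m:ℝ)+1) - (z+(m:ℝ))⁻¹) (1/(y+(m:ℝ))^2) y := by
        have h4 := hinv.const_sub (1/((m:ℝ)+1))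
        exact h4.congr_deriv (by ring)
      show HasDerivAt (fun z => t m z) (1/(y+(m:ℝ))^2) y
      simp only [ht_def, one_div]
      simpa [one_div] using h3
    have := hsum.const_add (-γ)
    simpa only [hf_def] using this
  have hfg : ∀ y ∈ Ioo a b, Tendsto (fun n => f n y) atTop (𝓝 (dg y)) := by
    intro y hy
    have hy0 : 0 < y := ha.trans hy.1
    have := (summable_dterm hy0).hasSum.tendsto_sum_nat
    have h2 := this.const_add (-γ)
    simpa only [dg, hf_def, ht_def] using h2
  have := hasDerivAt_of_tendstoUniformlyOn isOpen_Ioo hf'unif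
    (Filter.Eventually.of_forall hf) hfg hmem
  simpa only [tg] using this

lemma digamma_eq {x : ℝ} (hx : 0 < x) : digamma x = dg x :=
  (hasDerivAt_log_Gamma hx).deriv

lemma trigamma_eq {x : ℝ} (hx : 0 < x) : trigamma x = tg x := by
  have hev : digamma =ᶠ[nhds x] dg := by
    filter_upwards [eventually_gt_nhds hx] with y hy using digamma_eq hy
  rw [trigamma, hev.deriv_eq, (hasDerivAt_dg hx).deriv]

lemma hasDerivAt_digamma {x : ℝ} (hx : 0 < x) : HasDerivAt digamma (trigamma x) x := by
  rw [trigamma_eq hx]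
  apply (hasDerivAt_dg hx).congr_of_eventuallyEq
  filter_upwards [eventually_gt_nhds hx] with y hy using digamma_eq hy

section digammaBounds

private lemma hconv : ConvexOn ℝ (Ioi 0) (fun s : ℝ => Real.log (Real.Gamma s)) := by
  simpa only [Function.comp_def] using Real.convexOn_log_Gamma

private lemma hder {y : ℝ} (hy : 0 < y) :
    DifferentiableAt ℝ (fun s : ℝ => Real.log (Real.Gamma s)) y := by
  have hne : ∀ m : ℕ, y ≠ -m := fun m =>
    ne_of_gt (lt_of_le_of_lt (neg_nonpos.mpr (Nat.cast_nonneg m)) hy)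
  exact (Real.differentiableAt_Gamma hne).log (Real.Gamma_ne_zero hne)

private lemma hrec {y : ℝ} (hy : 0 < y) :
    Real.log (Real.Gamma (y+1)) = Real.log (Real.Gamma y) + Real.log y := by
  rw [Real.Gamma_add_one hy.ne', Real.log_mul hy.ne' (Real.Gamma_pos_of_pos hy).ne', add_comm]

lemma digamma_le_log {x : ℝ} (hx : 0 < x) : digamma x ≤ Real.log x := by
  have h := hconv.deriv_le_slope (mem_Ioi.mpr hx) (mem_Ioi.mpr (by linarith : (0:ℝ) < x+1))
    (by linarith) (hder hx)
  rw [slope_def_field, hrec hx] at h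
  simpa [digamma] using h

lemma log_le_digamma {x : ℝ} (hx : 1 < x) : Real.log (x-1) ≤ digamma x := by
  have hx0 : 0 < x := by linarith
  have hx1 : 0 < x - 1 := by linarith
  have h := hconv.slope_le_deriv (mem_Ioi.mpr hx1) (mem_Ioi.mpr hx0)
    (by linarith) (hder hx0)
  rw [slope_def_field] at h
  have e : Real.log (Real.Gamma x) = Real.log (Real.Gamma (x-1)) + Real.log (x-1) := by
    have := hrec hx1
    rw [sub_add_cancel] at this
    exact this
  rw [e] at h
  have e2 : (Real.log (Real.Gamma (x-1)) + Real.log (x-1) - Real.log (Real.Gamma (x-1))) / (x - (x-1))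
      = Real.log (x-1) := by
    field_simp
    ring
  rw [e2] at h
  simpa [digamma] using h

end digammaBounds

/-- The NSB hyperprior density integrates to one:
`∫_0^∞ (K ψ₁(Kα + 1) − ψ₁(α + 1)) dα = log K`, i.e.
`p_nsb(α) = (K ψ₁(Kα + 1) − ψ₁(α + 1)) / log K` is a probability density on `(0, ∞)`. -/
theorem nsb_density_normalizes (K : ℕ) (hK : 2 ≤ K) :
    (∫ α in Set.Ioi (0 : ℝ),
        ((K : ℝ) * trigamma ((K : ℝ) * α + 1) - trigamma (α + 1))) = Real.log K := by
  have hK0 : (0:ℝ) < K := by exact_mod_cast Nat.lt_of_lt_of_le Nat.zero_lt_two hK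
  have hK1 : (1:ℝ) ≤ K := by exact_mod_cast Nat.one_le_of_lt hK
  set g : ℝ → ℝ := fun α => (K:ℝ) * trigamma ((K:ℝ)*α+1) - trigamma (α+1) with hg_def
  -- measurability
  have htri_meas : Measurable trigamma := measurable_deriv _
  have hmeas : Measurable g := by
    apply Measurable.sub
    · exact (htri_meas.comp (by fun_prop)).const_mul _
    · exact htri_meas.comp (by fun_prop)
  -- bound on (0, 1]
  have hb1 : ∀ α ∈ Ioc (0:ℝ) 1, ‖g α‖ ≤ 2*(K:ℝ) + 2 := by
    intro α hα
    obtain ⟨hα0, hα1⟩ := hα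
    have h1 : (0:ℝ) < (K:ℝ)*α+1 := by nlinarith
    have h2 : (0:ℝ) < α+1 := by linarith
    have e1 : trigamma ((K:ℝ)*α+1) = tg ((K:ℝ)*α+1) := trigamma_eq h1
    have e2 : trigamma (α+1) = tg (α+1) := trigamma_eq h2
    have u1 : tg ((K:ℝ)*α+1) ≤ 2 := le_trans (tg_anti one_pos (by nlinarith)) tg_one_le_two
    have u2 : tg (α+1) ≤ 2 := le_trans (tg_anti one_pos (by linarith)) tg_one_le_two
    have n1 : 0 ≤ tg ((K:ℝ)*α+1) := tg_nonneg h1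
    have n2 : 0 ≤ tg (α+1) := tg_nonneg h2
    rw [hg_def]
    simp only [Real.norm_eq_abs]
    rw [e1, e2, abs_le]
    constructor <;> nlinarith
  -- bound on (1, ∞)
  have hb2 : ∀ α ∈ Ioi (1:ℝ), ‖g α‖ ≤ α ^ (-2:ℝ) := by
    intro α hα
    have hα1 : (1:ℝ) < α := hα
    have hα0 : (0:ℝ) < α := by linarith
    have hKα : (0:ℝ) < (K:ℝ)*α := by positivity
    have h1 : (0:ℝ) < (K:ℝ)*α+1 := by linarith
    have h2 : (0:ℝ) < α+1 := by linarith
    have e1 : trigamma ((K:ℝ)*α+1) = tg ((K:ℝ)*α+1) := trigamma_eq h1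
    have e2 : trigamma (α+1) = tg (α+1) := trigamma_eq h2
    have up1 : tg ((K:ℝ)*α+1) ≤ 1/((K:ℝ)*α) := by
      have := tg_le (show (1:ℝ) < (K:ℝ)*α+1 by linarith)
      rwa [show (K:ℝ)*α+1-1 = (K:ℝ)*α by ring] at this
    have lo1 : 1/((K:ℝ)*α+1) ≤ tg ((K:ℝ)*α+1) := tg_ge h1
    have up2 : tg (α+1) ≤ 1/α := by
      have := tg_le (show (1:ℝ) < α+1 by linarith)
      rwa [show α+1-1 = α by ring] at this
    have lo2 : 1/(α+1) ≤ tg (α+1) := tg_ge h2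
    have hrpow : α ^ (-2:ℝ) = 1/α^2 := by
      rw [Real.rpow_neg hα0.le, one_div]
      congr 1
      rw [show ((2:ℝ)) = ((2:ℕ):ℝ) by norm_num, Real.rpow_natCast]
    rw [hg_def]
    simp only [Real.norm_eq_abs]
    rw [e1, e2, abs_le, hrpow]
    have key1 : (K:ℝ) * tg ((K:ℝ)*α+1) ≤ 1/α := by
      have := mul_le_mul_of_nonneg_left up1 hK0.le
      calc (K:ℝ) * tg ((K:ℝ)*α+1) ≤ (K:ℝ) * (1/((K:ℝ)*α)) := this
        _ = 1/α := by field_simp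
    have key2 : (K:ℝ)/((K:ℝ)*α+1) ≤ (K:ℝ) * tg ((K:ℝ)*α+1) := by
      have := mul_le_mul_of_nonneg_left lo1 hK0.le
      calc (K:ℝ)/((K:ℝ)*α+1) = (K:ℝ) * (1/((K:ℝ)*α+1)) := by rw [mul_one_div]
        _ ≤ (K:ℝ) * tg ((K:ℝ)*α+1) := this
    constructor
    · -- -(1/α^2) ≤ K tg(Kα+1) - tg(α+1)
      have step : -(1/α^2) ≤ (K:ℝ)/((K:ℝ)*α+1) - 1/α := by
        rw [div_sub_div _ _ h1.ne' hα0.ne', neg_le, ← neg_div, neg_sub]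
        rw [div_le_div_iff₀ (by positivity) (by positivity)]
        nlinarith
      linarith
    · -- K tg(Kα+1) - tg(α+1) ≤ 1/α^2
      have step : 1/α - 1/(α+1) ≤ 1/α^2 := by
        rw [div_sub_div _ _ hα0.ne' h2.ne', div_le_div_iff₀ (by positivity) (by positivity)]
        nlinarith
      linarith
  -- integrability
  have hint : IntegrableOn g (Ioi (0:ℝ)) := by
    rw [show Ioi (0:ℝ) = Ioc 0 1 ∪ Ioi 1 from (Ioc_union_Ioi_eq_Ioi (by norm_num)).symm]
    apply IntegrableOn.union
    · apply Integrable.mono' (integrableOn_const (C := 2*(K:ℝ)+2) measure_Ioc_lt_top.ne)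
        hmeas.aestronglyMeasurable
      filter_upwards [ae_restrict_mem measurableSet_Ioc] with α hα using hb1 α hα
    · apply Integrable.mono' (integrableOn_Ioi_rpow_of_lt (by norm_num : (-2:ℝ) < -1) one_pos)
        hmeas.aestronglyMeasurable
      filter_upwards [ae_restrict_mem measurableSet_Ioi] with α hα using hb2 α hα
  -- FTC
  set F : ℝ → ℝ := fun α => digamma ((K:ℝ)*α+1) - digamma (α+1) with hF_def
  have hFderiv : ∀ α : ℝ, 0 ≤ α → HasDerivAt F (g α) α := by
    intro α hα
    have h1 : (0:ℝ) < (K:ℝ)*α+1 := by nlinarith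
    have h2 : (0:ℝ) < α+1 := by linarith
    have hu : HasDerivAt (fun z : ℝ => (K:ℝ)*z+1) (K:ℝ) α := by
      simpa using ((hasDerivAt_id α).const_mul (K:ℝ)).add_const 1
    have hv : HasDerivAt (fun z : ℝ => z+1) 1 α := (hasDerivAt_id α).add_const 1
    have hd1 := (hasDerivAt_digamma h1).comp α hu
    have hd2 := (hasDerivAt_digamma h2).comp α hv
    have := hd1.fun_sub hd2
    rw [hg_def, hF_def]
    exact this.congr_deriv (by simp only []; ring)
  have hFTC : ∀ R : ℝ, 0 ≤ R → ∫ α in (0:ℝ)..R, g α = F R - F 0 := by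
    intro R hR
    apply intervalIntegral.integral_eq_sub_of_hasDerivAt
    · intro α hα
      rw [uIcc_of_le hR] at hα
      exact hFderiv α hα.1
    · rw [intervalIntegrable_iff_integrableOn_Ioc_of_le hR]
      exact hint.mono_set Ioc_subset_Ioi_self
  have hF0 : F 0 = 0 := by
    rw [hF_def]
    norm_num
  -- limit of F at infinity
  have hL : Tendsto (fun R : ℝ => Real.log ((K:ℝ)*R) - Real.log (R+1)) atTop
      (𝓝 (Real.log K)) := by
    have hq : Tendsto (fun R : ℝ => (K:ℝ)*R/(R+1)) atTop (𝓝 (K:ℝ)) := by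
      have h0 : Tendsto (fun R : ℝ => 1/(R+1)) atTop (𝓝 0) := by
        simpa only [one_div, Pi.inv_def, id] using
          (tendsto_atTop_add_const_right atTop (1:ℝ) tendsto_id).inv_tendsto_atTop
      have h1 : Tendsto (fun R : ℝ => (K:ℝ)*(1 - 1/(R+1))) atTop (𝓝 ((K:ℝ)*(1-0))) :=
        (tendsto_const_nhds.sub h0).const_mul _
      rw [mul_sub, mul_one, mul_zero, sub_zero] at h1
      apply h1.congr'
      filter_upwards [eventually_gt_atTop (0:ℝ)] with R hR
      have : R + 1 ≠ 0 := by linarith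
      field_simp
      ring
    have hlog := (Real.continuousAt_log hK0.ne').tendsto.comp hq
    apply hlog.congr'
    filter_upwards [eventually_gt_atTop (0:ℝ)] with R hR
    rw [Function.comp_apply, Real.log_div (by positivity) (by linarith)]
  have hU : Tendsto (fun R : ℝ => Real.log ((K:ℝ)*R+1) - Real.log R) atTop
      (𝓝 (Real.log K)) := by
    have hq : Tendsto (fun R : ℝ => ((K:ℝ)*R+1)/R) atTop (𝓝 (K:ℝ)) := by
      have h0 : Tendsto (fun R : ℝ => 1/R) atTop (𝓝 0) := by
        simpa only [one_div] using tendsto_inv_atTop_zero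
      have h1 : Tendsto (fun R : ℝ => (K:ℝ) + 1/R) atTop (𝓝 ((K:ℝ) + 0)) :=
        tendsto_const_nhds.add h0
      rw [add_zero] at h1
      apply h1.congr'
      filter_upwards [eventually_gt_atTop (0:ℝ)] with R hR
      field_simp
    have hlog := (Real.continuousAt_log hK0.ne').tendsto.comp hq
    apply hlog.congr'
    filter_upwards [eventually_gt_atTop (0:ℝ)] with R hR
    rw [Function.comp_apply, Real.log_div (by positivity) (by positivity)]
  have hFlim : Tendsto F atTop (𝓝 (Real.log K)) := by
    apply tendsto_of_tendsto_of_tendsto_of_le_of_le' hL hU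
    · filter_upwards [eventually_gt_atTop (0:ℝ)] with R hR
      have hKR : (0:ℝ) < (K:ℝ)*R := by positivity
      have lo := log_le_digamma (show (1:ℝ) < (K:ℝ)*R+1 by linarith)
      have up := digamma_le_log (show (0:ℝ) < R+1 by linarith)
      rw [show (K:ℝ)*R+1-1 = (K:ℝ)*R by ring] at lo
      rw [hF_def]
      simp only
      linarith
    · filter_upwards [eventually_gt_atTop (0:ℝ)] with R hR
      have hKR : (0:ℝ) < (K:ℝ)*R := by positivity
      have up := digamma_le_log (show (0:ℝ) < (K:ℝ)*R+1 by linarith)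
      have lo := log_le_digamma (show (1:ℝ) < R+1 by linarith)
      rw [show R+1-1 = R by ring] at lo
      rw [hF_def]
      simp only
      linarith
  -- conclusion
  have hIntLim := MeasureTheory.intervalIntegral_tendsto_integral_Ioi 0 hint tendsto_id
  have hIntLim2 : Tendsto (fun R : ℝ => ∫ α in (0:ℝ)..R, g α) atTop (𝓝 (Real.log K)) := by
    apply hFlim.congr'
    filter_upwards [eventually_ge_atTop (0:ℝ)] with R hR
    rw [hFTC R hR, hF0, sub_zero]
  exact tendsto_nhds_unique hIntLim hIntLim2
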